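/- Within each valid initial data set indexed by a generalized Motzkin path, the solutions of the quantum Q-system t-commute: for every vector m⃗ = (m⃗_1,…,m⃗_r) ∈ ℤ^r satisfying |m⃗_α − m⃗_β| ≤ 1 whenever C_{αβ} = −1, and for all α, β ∈ {1,…,r} and all ε, ε' ∈ {0,1}, one has Q_{α, m⃗_α+ε} · Q_{β, m⃗_β+ε'} = t^{λ_{αβ}·((m⃗_β+ε') − (m⃗_α+ε))} · Q_{β, m⃗_β+ε'} · Q_{α, m⃗_α+ε}. -/

import Mathlib

/-!
# Statement 4: t-commutation of quantum Q-system solutions within a valid initial data set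

Within each valid initial data set indexed by a generalized Motzkin path `m⃗`, the solutions
of the simply-laced quantum Q-system satisfy
`Q_{α, m⃗_α+ε} Q_{β, m⃗_β+ε'} = t^{λ_{αβ}((m⃗_β+ε') − (m⃗_α+ε))} Q_{β, m⃗_β+ε'} Q_{α, m⃗_α+ε}`.
-/

open scoped BigOperators

/-- The ordered product `∏_{β : C_{αβ} = −1} Q_{β,n}` (taken in increasing order of `β`;
in any model the factors commute, so the order is immaterial). -/
def nbrProd {R : Type*} [Ring R] {r : ℕ} (C : Matrix (Fin r) (Fin r) ℤ)
    (Q : Fin r → ℤ → R) (α : Fin r) (n : ℤ) : R :=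
  (((Finset.univ.filter (fun β => C α β = -1)).sort (· ≤ ·)).map (fun β => Q β n)).prod


namespace QQAux

variable {R : Type*} [Ring R]

/-- Central scalar `t^e`. -/
def T (t : Rˣ) (e : ℤ) : R := ((t ^ e : Rˣ) : R)

theorem T_central {t : Rˣ} (hc : ∀ x : R, (t : R) * x = x * (t : R)) (e : ℤ) (x : R) :
    T t e * x = x * T t e := by
  have hinv : ∀ u : Rˣ, (∀ y : R, (u : R) * y = y * u) →
      ∀ y : R, ((u⁻¹ : Rˣ) : R) * y = y * ((u⁻¹ : Rˣ) : R) := by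
    intro u hu y
    calc ((u⁻¹ : Rˣ) : R) * y = ((u⁻¹ : Rˣ) : R) * (y * u) * ((u⁻¹ : Rˣ) : R) := by
          rw [mul_assoc ((u⁻¹ : Rˣ) : R) (y * (u : R)), mul_assoc,
            Units.mul_inv, mul_one]
      _ = ((u⁻¹ : Rˣ) : R) * ((u : R) * y) * ((u⁻¹ : Rˣ) : R) := by rw [hu y]
      _ = y * ((u⁻¹ : Rˣ) : R) := by
          rw [← mul_assoc ((u⁻¹ : Rˣ) : R) (u : R) y, Units.inv_mul, one_mul]
  have hpow : ∀ n : ℕ, ∀ y : R, ((t ^ n : Rˣ) : R) * y = y * ((t ^ n : Rˣ) : R) := by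
    intro n
    induction n with
    | zero => intro y; simp
    | succ k ih =>
      intro y
      rw [pow_succ, Units.val_mul, mul_assoc, hc y, ← mul_assoc, ih, mul_assoc]
  rcases e with n | n
  · simpa [T, zpow_natCast] using hpow n x
  · have := hinv (t ^ (n + 1)) (hpow (n + 1)) x
    simpa [T, zpow_negSucc] using this

theorem T_mul_T {t : Rˣ} (e f : ℤ) : (T t e : R) * T t f = T t (e + f) := by
  rw [T, T, T, ← Units.val_mul, ← zpow_add]

theorem T_zero {t : Rˣ} : (T t 0 : R) = 1 := by simp [T]

section
variable {t : Rˣ} (hc : ∀ x : R, (t : R) * x = x * (t : R))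
include hc

theorem Tpull (c : ℤ) (x y : R) : x * (T t c * y) = T t c * (x * y) := by
  rw [← mul_assoc, ← T_central hc, mul_assoc]

end

theorem Tmul' {t : Rˣ} (e f : ℤ) (x : R) : T t e * (T t f * x) = T t (e + f) * x := by
  rw [← mul_assoc, T_mul_T]

/-- `x` and `y` `t`-commute with exponent `e`. -/
def tc (t : Rˣ) (e : ℤ) (x y : R) : Prop := x * y = T t e * (y * x)

theorem tc_refl {t : Rˣ} (x : R) : tc t 0 x x := by simp [tc, T]

theorem tc_one {t : Rˣ} (G : R) : tc t 0 1 G := by simp [tc, T]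

theorem tc_symm {t : Rˣ} {e : ℤ} {x y : R} (h : tc t e x y) : tc t (-e) y x := by
  rw [tc] at h ⊢
  rw [h, Tmul', neg_add_cancel, T_zero, one_mul]

section
variable {t : Rˣ} (hc : ∀ x : R, (t : R) * x = x * (t : R))
include hc

theorem tc_mul {e f : ℤ} {x y G : R}
    (hx : tc t e x G) (hy : tc t f y G) : tc t (e + f) (x * y) G := by
  rw [tc] at hx hy ⊢
  calc x * y * G = x * (T t f * (G * y)) := by rw [mul_assoc, hy]
    _ = T t f * (x * G * y) := by rw [Tpull hc, mul_assoc]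
    _ = T t f * (T t e * (G * x * y)) := by rw [hx, mul_assoc]
    _ = T t (e + f) * (G * (x * y)) := by rw [Tmul', add_comm f e, mul_assoc]

theorem tc_T_mul {e c : ℤ} {x G : R} (hx : tc t e x G) : tc t e (T t c * x) G := by
  rw [tc] at hx ⊢
  rw [mul_assoc, hx, Tmul', add_comm c e, ← Tmul', ← Tpull hc c G x]

theorem tc_unit_inv {e : ℤ} {G : R}
    (u : Rˣ) (h : tc t e (u : R) G) : tc t (-e) ((u⁻¹ : Rˣ) : R) G := by
  rw [tc] at h ⊢
  have key : G * ((u⁻¹ : Rˣ) : R) = T t e * (((u⁻¹ : Rˣ) : R) * G) := by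
    calc G * ((u⁻¹ : Rˣ) : R)
        = ((u⁻¹ : Rˣ) : R) * ((u : R) * G) * ((u⁻¹ : Rˣ) : R) := by
          rw [← mul_assoc ((u⁻¹ : Rˣ) : R) (u : R) G, Units.inv_mul, one_mul]
      _ = ((u⁻¹ : Rˣ) : R) * (T t e * (G * u)) * ((u⁻¹ : Rˣ) : R) := by rw [h]
      _ = T t e * (((u⁻¹ : Rˣ) : R) * (G * ((u : R) * ((u⁻¹ : Rˣ) : R)))) := by
          rw [Tpull hc]
          simp only [mul_assoc]
      _ = T t e * (((u⁻¹ : Rˣ) : R) * G) := by rw [Units.mul_inv, mul_one]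
  rw [key, Tmul', neg_add_cancel, T_zero, one_mul]

omit hc in
theorem tc_sub {e : ℤ} {x y G : R} (hx : tc t e x G) (hy : tc t e y G) :
    tc t e (x - y) G := by
  rw [tc] at hx hy ⊢
  rw [sub_mul, hx, hy, ← mul_sub, ← mul_sub]

theorem tc_list_prod {ι : Type*}
    (G : R) (l : List ι) (e : ι → ℤ) (f : ι → R)
    (h : ∀ i ∈ l, tc t (e i) (f i) G) :
    tc t ((l.map e).sum) ((l.map f).prod) G := by
  induction l with
  | nil => simpa using tc_one G
  | cons a l ih =>
    simp only [List.map_cons, List.sum_cons, List.prod_cons]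
    exact tc_mul hc (h a List.mem_cons_self) (ih fun i hi => h i (List.mem_cons_of_mem a hi))

end

end QQAux

namespace QQAux

variable {R : Type*} [Ring R] {r : ℕ}

theorem tc_exp_congr {t : Rˣ} {e f : ℤ} {x y : R} (h : e = f) (hx : tc t e x y) :
    tc t f x y := h ▸ hx

theorem tc_exp_congr' {t : Rˣ} {e f : ℤ} {x y : R} (hx : tc t e x y) (h : e = f) :
    tc t f x y := h ▸ hx

section
variable {t : Rˣ} (hc : ∀ x : R, (t : R) * x = x * (t : R))
include hc

theorem tc_nbrProd {C L : Matrix (Fin r) (Fin r) ℤ} {Q : Fin r → ℤ → R}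
    (α₀ β : Fin r) (n b : ℤ)
    (h : ∀ γ, C α₀ γ = -1 → tc t (L γ β * (b - n)) (Q γ n) (Q β b)) :
    tc t ((∑ γ ∈ Finset.univ.filter (fun γ => C α₀ γ = -1), L γ β) * (b - n))
      (nbrProd C Q α₀ n) (Q β b) := by
  have hl := tc_list_prod hc (Q β b)
      ((Finset.univ.filter (fun γ => C α₀ γ = -1)).sort (· ≤ ·))
      (fun γ => L γ β * (b - n)) (fun γ => Q γ n)
      (fun γ hγ => h γ (by
        have := Finset.mem_sort (α := Fin r) (· ≤ ·) |>.mp hγ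
        exact (Finset.mem_filter.mp this).2))
  have hsum : ((((Finset.univ.filter (fun γ => C α₀ γ = -1)).sort (· ≤ ·)).map
      (fun γ => L γ β * (b - n))).sum)
      = (∑ γ ∈ Finset.univ.filter (fun γ => C α₀ γ = -1), L γ β) * (b - n) := by
    rw [List.Perm.sum_eq (List.Perm.map _ (Finset.sort_perm_toList _ _)),
      Finset.sum_map_toList, Finset.sum_mul]
  exact tc_exp_congr hsum hl

/-- Key computation: commutation of the new generator after a forward mutation. -/
theorem tc_forward_new {C L : Matrix (Fin r) (Fin r) ℤ} {Q : Fin r → ℤ → R}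
    (hunit : ∀ α n, IsUnit (Q α n))
    (hsys : ∀ α (n : ℤ), T t (L α α) * (Q α (n + 1) * Q α (n - 1)) =
      Q α n ^ 2 - nbrProd C Q α n)
    (α₀ β : Fin r) (n b : ℤ)
    (hB : tc t (L α₀ β * (b - n)) (Q α₀ n) (Q β b))
    (hA : tc t (L α₀ β * (b - (n - 1))) (Q α₀ (n - 1)) (Q β b))
    (hP : ∀ γ, C α₀ γ = -1 → tc t (L γ β * (b - n)) (Q γ n) (Q β b))
    (heq : (∑ γ ∈ Finset.univ.filter (fun γ => C α₀ γ = -1), L γ β) * (b - n)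
      = 2 * L α₀ β * (b - n)) :
    tc t (L α₀ β * (b - (n + 1))) (Q α₀ (n + 1)) (Q β b) := by
  set a : Rˣ := (hunit α₀ (n - 1)).unit with ha'
  have ha : (a : R) = Q α₀ (n - 1) := (hunit α₀ (n - 1)).unit_spec
  have hS : tc t (2 * L α₀ β * (b - n)) (Q α₀ n ^ 2 - nbrProd C Q α₀ n) (Q β b) := by
    refine tc_sub ?_ ?_
    · have := tc_mul hc hB hB
      rw [← pow_two] at this
      exact tc_exp_congr' this (by ring)
    · exact tc_exp_congr heq (tc_nbrProd hc α₀ β n b hP)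
  have h2 : Q α₀ (n + 1) * Q α₀ (n - 1)
      = T t (-(L α₀ α₀)) * (Q α₀ n ^ 2 - nbrProd C Q α₀ n) := by
    rw [← hsys α₀ n, Tmul', neg_add_cancel, T_zero, one_mul]
  have h3 : Q α₀ (n + 1)
      = T t (-(L α₀ α₀)) * ((Q α₀ n ^ 2 - nbrProd C Q α₀ n) * ((a⁻¹ : Rˣ) : R)) := by
    calc Q α₀ (n + 1) = Q α₀ (n + 1) * (Q α₀ (n - 1) * ((a⁻¹ : Rˣ) : R)) := by
          rw [← ha, Units.mul_inv, mul_one]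
      _ = (Q α₀ (n + 1) * Q α₀ (n - 1)) * ((a⁻¹ : Rˣ) : R) := by rw [mul_assoc]
      _ = T t (-(L α₀ α₀)) * ((Q α₀ n ^ 2 - nbrProd C Q α₀ n) * ((a⁻¹ : Rˣ) : R)) := by
          rw [h2, mul_assoc]
  have hA' : tc t (L α₀ β * (b - (n - 1))) ((a : R)) (Q β b) := by rw [ha]; exact hA
  have final := tc_T_mul hc (c := -(L α₀ α₀)) (tc_mul hc hS (tc_unit_inv hc a hA'))
  rw [← h3] at final
  exact tc_exp_congr (by ring) final

/-- Key computation: commutation of the new generator after a backward mutation. -/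
theorem tc_backward_new {C L : Matrix (Fin r) (Fin r) ℤ} {Q : Fin r → ℤ → R}
    (hunit : ∀ α n, IsUnit (Q α n))
    (hsys : ∀ α (n : ℤ), T t (L α α) * (Q α (n + 1) * Q α (n - 1)) =
      Q α n ^ 2 - nbrProd C Q α n)
    (α₀ β : Fin r) (n b : ℤ)
    (hB : tc t (L α₀ β * (b - (n + 1))) (Q α₀ (n + 1)) (Q β b))
    (hN : tc t (L α₀ β * (b - n)) (Q α₀ n) (Q β b))
    (hP : ∀ γ, C α₀ γ = -1 → tc t (L γ β * (b - n)) (Q γ n) (Q β b))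
    (heq : (∑ γ ∈ Finset.univ.filter (fun γ => C α₀ γ = -1), L γ β) * (b - n)
      = 2 * L α₀ β * (b - n)) :
    tc t (L α₀ β * (b - (n - 1))) (Q α₀ (n - 1)) (Q β b) := by
  set u : Rˣ := (hunit α₀ (n + 1)).unit with hu'
  have hu : (u : R) = Q α₀ (n + 1) := (hunit α₀ (n + 1)).unit_spec
  have hS : tc t (2 * L α₀ β * (b - n)) (Q α₀ n ^ 2 - nbrProd C Q α₀ n) (Q β b) := by
    refine tc_sub ?_ ?_
    · have := tc_mul hc hN hN
      rw [← pow_two] at this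
      exact tc_exp_congr' this (by ring)
    · exact tc_exp_congr heq (tc_nbrProd hc α₀ β n b hP)
  have h2 : Q α₀ (n + 1) * Q α₀ (n - 1)
      = T t (-(L α₀ α₀)) * (Q α₀ n ^ 2 - nbrProd C Q α₀ n) := by
    rw [← hsys α₀ n, Tmul', neg_add_cancel, T_zero, one_mul]
  have h3 : Q α₀ (n - 1)
      = T t (-(L α₀ α₀)) * (((u⁻¹ : Rˣ) : R) * (Q α₀ n ^ 2 - nbrProd C Q α₀ n)) := by
    calc Q α₀ (n - 1) = ((u⁻¹ : Rˣ) : R) * (u : R) * Q α₀ (n - 1) := by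
          rw [Units.inv_mul, one_mul]
      _ = ((u⁻¹ : Rˣ) : R) * (Q α₀ (n + 1) * Q α₀ (n - 1)) := by rw [hu, mul_assoc]
      _ = T t (-(L α₀ α₀)) * (((u⁻¹ : Rˣ) : R) * (Q α₀ n ^ 2 - nbrProd C Q α₀ n)) := by
          rw [h2, Tpull hc]
  have hB' : tc t (L α₀ β * (b - (n + 1))) ((u : R)) (Q β b) := by rw [hu]; exact hB
  have final := tc_T_mul hc (c := -(L α₀ α₀)) (tc_mul hc (tc_unit_inv hc u hB') hS)
  rw [← h3] at final
  exact tc_exp_congr (by ring) final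

end

end QQAux

namespace QQAux

variable {R : Type*} [Ring R] {r : ℕ}

/-- All pairwise `t`-commutations within the initial data set indexed by `m`. -/
def CommAt (t : Rˣ) (L : Matrix (Fin r) (Fin r) ℤ) (Q : Fin r → ℤ → R)
    (m : Fin r → ℤ) : Prop :=
  ∀ α β : Fin r, ∀ a b : ℤ, (a = m α ∨ a = m α + 1) → (b = m β ∨ b = m β + 1) →
    tc t (L α β * (b - a)) (Q α a) (Q β b)

section
variable {t : Rˣ} (hc : ∀ x : R, (t : R) * x = x * (t : R))
  {C L : Matrix (Fin r) (Fin r) ℤ} {Q : Fin r → ℤ → R}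
  (hLsym : ∀ a b : Fin r, L a b = L b a)
  (hLrow : ∀ α β : Fin r, α ≠ β →
    2 * L α β = ∑ γ ∈ Finset.univ.filter (fun γ => C α γ = -1), L γ β)
  (hunit : ∀ α n, IsUnit (Q α n))
  (hsys : ∀ α (n : ℤ), T t (L α α) * (Q α (n + 1) * Q α (n - 1)) =
    Q α n ^ 2 - nbrProd C Q α n)
include hc hLsym hLrow hunit hsys

theorem forward_step (m : Fin r → ℤ) (α₀ : Fin r)
    (hnbr : ∀ γ, C α₀ γ = -1 → m γ = m α₀ ∨ m γ = m α₀ + 1)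
    (hm : CommAt t L Q m) :
    CommAt t L Q (Function.update m α₀ (m α₀ + 1)) := by
  have key : ∀ β b, (b = m β ∨ b = m β + 1) → (β ≠ α₀ ∨ b = m α₀ + 1) →
      tc t (L α₀ β * (b - (m α₀ + 2))) (Q α₀ (m α₀ + 2)) (Q β b) := by
    intro β b hb hside
    have hm1 : m α₀ + 1 - 1 = m α₀ := by ring
    have heq : (∑ γ ∈ Finset.univ.filter (fun γ => C α₀ γ = -1), L γ β)
        * (b - (m α₀ + 1)) = 2 * L α₀ β * (b - (m α₀ + 1)) := by
      rcases hside with h | h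
      · rw [hLrow α₀ β (Ne.symm h)]  -- fix direction below if needed
      · rw [h]; ring
    have := tc_forward_new hc hunit hsys α₀ β (m α₀ + 1) b
      (hm α₀ β (m α₀ + 1) b (Or.inr rfl) hb)
      (by rw [hm1]; exact hm α₀ β (m α₀) b (Or.inl rfl) hb)
      (fun γ hγ => by
        rcases hnbr γ hγ with h | h
        · exact hm γ β (m α₀ + 1) b (Or.inr (by rw [h])) hb
        · exact hm γ β (m α₀ + 1) b (Or.inl h.symm) hb)
      heq
    rw [show m α₀ + 1 + 1 = m α₀ + 2 by ring] at this
    exact tc_exp_congr' this (by ring)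
  intro α β a b ha hb
  have ha' : (α = α₀ ∧ a = m α₀ + 2) ∨ (a = m α ∨ a = m α + 1) := by
    by_cases hα : α = α₀
    · rw [hα, Function.update_self] at ha
      rcases ha with h | h
      · exact Or.inr (Or.inr (by rw [hα]; omega))
      · exact Or.inl ⟨hα, by omega⟩
    · rw [Function.update_of_ne hα] at ha
      exact Or.inr ha
  have hb' : (β = α₀ ∧ b = m α₀ + 2) ∨ (b = m β ∨ b = m β + 1) := by
    by_cases hβ : β = α₀
    · rw [hβ, Function.update_self] at hb
      rcases hb with h | h
      · exact Or.inr (Or.inr (by rw [hβ]; omega))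
      · exact Or.inl ⟨hβ, by omega⟩
    · rw [Function.update_of_ne hβ] at hb
      exact Or.inr hb
  rcases ha' with ⟨hα, ha2⟩ | haold
  · rcases hb' with ⟨hβ, hb2⟩ | hbold
    · rw [hα, hβ, ha2, hb2]
      exact tc_exp_congr' (tc_refl _) (by ring)
    · rw [hα, ha2]
      refine key β b hbold ?_
      by_cases hβ : β = α₀
      · rw [hβ, Function.update_self] at hb
        rw [hβ] at hbold
        right; omega
      · exact Or.inl hβ
  · rcases hb' with ⟨hβ, hb2⟩ | hbold
    · rw [hβ, hb2]
      have hside : α ≠ α₀ ∨ a = m α₀ + 1 := by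
        by_cases hα : α = α₀
        · rw [hα, Function.update_self] at ha
          rw [hα] at haold
          right; omega
        · exact Or.inl hα
      exact tc_exp_congr' (tc_symm (key α a haold hside)) (by rw [hLsym α α₀]; ring)
    · exact hm α β a b haold hbold

theorem backward_step (m : Fin r → ℤ) (α₀ : Fin r)
    (hnbr : ∀ γ, C α₀ γ = -1 → m γ = m α₀ - 1 ∨ m γ = m α₀)
    (hm : CommAt t L Q m) :
    CommAt t L Q (Function.update m α₀ (m α₀ - 1)) := by
  have key : ∀ β b, (b = m β ∨ b = m β + 1) → (β ≠ α₀ ∨ b = m α₀) →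
      tc t (L α₀ β * (b - (m α₀ - 1))) (Q α₀ (m α₀ - 1)) (Q β b) := by
    intro β b hb hside
    have heq : (∑ γ ∈ Finset.univ.filter (fun γ => C α₀ γ = -1), L γ β)
        * (b - m α₀) = 2 * L α₀ β * (b - m α₀) := by
      rcases hside with h | h
      · rw [hLrow α₀ β (Ne.symm h)]
      · rw [h]; ring
    exact tc_backward_new hc hunit hsys α₀ β (m α₀) b
      (hm α₀ β (m α₀ + 1) b (Or.inr rfl) hb)
      (hm α₀ β (m α₀) b (Or.inl rfl) hb)
      (fun γ hγ => by
        rcases hnbr γ hγ with h | h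
        · exact hm γ β (m α₀) b (Or.inr (by rw [h]; ring)) hb
        · exact hm γ β (m α₀) b (Or.inl h.symm) hb)
      heq
  intro α β a b ha hb
  have ha' : (α = α₀ ∧ a = m α₀ - 1) ∨ (a = m α ∨ a = m α + 1) := by
    by_cases hα : α = α₀
    · rw [hα, Function.update_self] at ha
      rcases ha with h | h
      · exact Or.inl ⟨hα, by omega⟩
      · exact Or.inr (Or.inl (by rw [hα]; omega))
    · rw [Function.update_of_ne hα] at ha
      exact Or.inr ha
  have hb' : (β = α₀ ∧ b = m α₀ - 1) ∨ (b = m β ∨ b = m β + 1) := by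
    by_cases hβ : β = α₀
    · rw [hβ, Function.update_self] at hb
      rcases hb with h | h
      · exact Or.inl ⟨hβ, by omega⟩
      · exact Or.inr (Or.inl (by rw [hβ]; omega))
    · rw [Function.update_of_ne hβ] at hb
      exact Or.inr hb
  rcases ha' with ⟨hα, ha2⟩ | haold
  · rcases hb' with ⟨hβ, hb2⟩ | hbold
    · rw [hα, hβ, ha2, hb2]
      exact tc_exp_congr' (tc_refl _) (by ring)
    · rw [hα, ha2]
      refine key β b hbold ?_
      by_cases hβ : β = α₀
      · rw [hβ, Function.update_self] at hb
        rw [hβ] at hbold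
        right; omega
      · exact Or.inl hβ
  · rcases hb' with ⟨hβ, hb2⟩ | hbold
    · rw [hβ, hb2]
      have hside : α ≠ α₀ ∨ a = m α₀ := by
        by_cases hα : α = α₀
        · rw [hα, Function.update_self] at ha
          rw [hα] at haold
          right; omega
        · exact Or.inl hα
      exact tc_exp_congr' (tc_symm (key α a haold hside)) (by rw [hLsym α α₀]; ring)
    · exact hm α β a b haold hbold

end

end QQAux

theorem quantum_Qsystem_commutation
    {R : Type*} [Ring R] (r : ℕ) (C : Matrix (Fin r) (Fin r) ℤ)
    -- `C` is the Cartan matrix of a simply-laced simple Lie algebra: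
    (hsym : C.IsSymm)
    (hdiag : ∀ α, C α α = 2)
    (hoff : ∀ α β, α ≠ β → C α β = 0 ∨ C α β = -1)
    (hpos : ∀ v : Fin r → ℤ, v ≠ 0 → 0 < ∑ α, ∑ β, v α * C α β * v β)
    (hconn : ∀ α β : Fin r, Relation.ReflTransGen (fun a b => C a b = -1) α β)
    -- `t` is a central unit of `R`:
    (t : Rˣ) (hcentral : ∀ x : R, (t : R) * x = x * (t : R))
    -- the `Q_{α,n}` are invertible elements of `R`:
    (Q : Fin r → ℤ → R) (hunit : ∀ α n, IsUnit (Q α n))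
    -- satisfying the quantum Q-system (`λ = δ C⁻¹ = adjugate C`):
    (hsys : ∀ α (n : ℤ),
      ((t ^ C.adjugate α α : Rˣ) : R) * (Q α (n + 1) * Q α (n - 1)) =
        Q α n ^ 2 - nbrProd C Q α n)
    -- and the initial commutation relations for `m, n ∈ {0,1}`:
    (hcomm : ∀ α β : Fin r, ∀ m n : ℤ, (m = 0 ∨ m = 1) → (n = 0 ∨ n = 1) →
      Q α n * Q β m = ((t ^ (C.adjugate α β * (m - n)) : Rˣ) : R) * (Q β m * Q α n))
    -- `m⃗` is a generalized Motzkin path: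
    (mv : Fin r → ℤ) (hmv : ∀ α β, C α β = -1 → |mv α - mv β| ≤ 1) :
    ∀ α β : Fin r, ∀ ε ε' : ℤ, (ε = 0 ∨ ε = 1) → (ε' = 0 ∨ ε' = 1) →
      Q α (mv α + ε) * Q β (mv β + ε') =
        ((t ^ (C.adjugate α β * ((mv β + ε') - (mv α + ε))) : Rˣ) : R) *
          (Q β (mv β + ε') * Q α (mv α + ε)) := by
  classical
  set L := C.adjugate with hL
  -- symmetry of `L`
  have hLsym : ∀ a b : Fin r, L a b = L b a := by
    intro a b
    have h1 : (C.adjugate).transpose = C.adjugate := by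
      rw [Matrix.adjugate_transpose, hsym.eq]
    have h2 := congrFun (congrFun h1 b) a
    rw [Matrix.transpose_apply] at h2
    exact h2
  -- row identity `2 L α β = ∑_{γ ~ α} L γ β` for `α ≠ β`
  have hLrow : ∀ α β : Fin r, α ≠ β →
      2 * L α β = ∑ γ ∈ Finset.univ.filter (fun γ => C α γ = -1), L γ β := by
    intro α β hne
    have hmul := Matrix.mul_adjugate C
    have h0 : ∑ γ, C α γ * L γ β = 0 := by
      have := congrArg (fun M => M α β) hmul
      simpa [Matrix.mul_apply, Matrix.smul_apply, Matrix.one_apply_ne hne] using this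
    rw [← Finset.add_sum_erase _ _ (Finset.mem_univ α), hdiag α] at h0
    have hsub : Finset.univ.filter (fun γ => C α γ = -1) ⊆ Finset.univ.erase α := by
      intro γ hγ
      have hγ' := (Finset.mem_filter.mp hγ).2
      refine Finset.mem_erase.mpr ⟨?_, Finset.mem_univ γ⟩
      intro h
      rw [h, hdiag α] at hγ'
      omega
    have hz : ∀ γ ∈ Finset.univ.erase α, γ ∉ Finset.univ.filter (fun γ => C α γ = -1) →
        C α γ * L γ β = 0 := by
      intro γ hγ hγ'
      have hγα : γ ≠ α := (Finset.mem_erase.mp hγ).1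
      have : C α γ ≠ -1 := by
        intro h
        exact hγ' (Finset.mem_filter.mpr ⟨Finset.mem_univ γ, h⟩)
      rcases hoff α γ (Ne.symm hγα) with h | h
      · rw [h, zero_mul]
      · exact absurd h this
    rw [← Finset.sum_subset hsub hz] at h0
    have hcongr : ∑ γ ∈ Finset.univ.filter (fun γ => C α γ = -1), C α γ * L γ β
        = ∑ γ ∈ Finset.univ.filter (fun γ => C α γ = -1), -(L γ β) := by
      refine Finset.sum_congr rfl fun γ hγ => ?_
      rw [(Finset.mem_filter.mp hγ).2]; ring
    rw [hcongr, Finset.sum_neg_distrib] at h0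
    linarith
  -- main induction on the total displacement of the Motzkin path
  have main : ∀ N : ℕ, ∀ m : Fin r → ℤ,
      (∀ α β, C α β = -1 → |m α - m β| ≤ 1) → (∑ α, (m α).natAbs) = N →
      QQAux.CommAt t L Q m := by
    intro N
    induction N using Nat.strong_induction_on with
    | _ N IH =>
      intro m hMotz hN
      by_cases h0 : ∀ γ, m γ = 0
      · -- base case: the fundamental initial data
        intro α β a b ha hb
        have ha' : a = 0 ∨ a = 1 := by rw [h0 α] at ha; omega
        have hb' : b = 0 ∨ b = 1 := by rw [h0 β] at hb; omega
        exact hcomm α β b a hb' ha'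
      · push_neg at h0
        obtain ⟨γ₀, hγ₀⟩ := h0
        have hne : (Finset.univ : Finset (Fin r)).Nonempty := ⟨γ₀, Finset.mem_univ _⟩
        by_cases hposc : ∃ γ, 0 < m γ
        · -- there is a positive maximum: mutate it down, then go back up
          obtain ⟨α₀, -, hmax⟩ := Finset.exists_max_image Finset.univ m hne
          have hmax' : ∀ γ, m γ ≤ m α₀ := fun γ => hmax γ (Finset.mem_univ γ)
          obtain ⟨γ₁, hγ₁⟩ := hposc
          have hα₀pos : 0 < m α₀ := lt_of_lt_of_le hγ₁ (hmax' γ₁)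
          set m' := Function.update m α₀ (m α₀ - 1) with hm'
          have hv0 : m' α₀ = m α₀ - 1 := by rw [hm', Function.update_self]
          have hvne : ∀ γ, γ ≠ α₀ → m' γ = m γ := by
            intro γ hγ; rw [hm', Function.update_of_ne hγ]
          have hMotz' : ∀ α β, C α β = -1 → |m' α - m' β| ≤ 1 := by
            intro α β hαβ
            have h1 := hMotz α β hαβ
            rw [abs_le] at h1 ⊢
            have h3 := hmax' α
            have h4 := hmax' β
            by_cases hα : α = α₀
            · by_cases hβ : β = α₀
              · rw [hα, hβ, hv0]; omega
              · rw [hα] at h1; rw [hα, hv0, hvne β hβ]; omega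
            · by_cases hβ : β = α₀
              · rw [hβ] at h1; rw [hβ, hv0, hvne α hα]; omega
              · rw [hvne α hα, hvne β hβ]; omega
          have hNlt : (∑ γ, (m' γ).natAbs) < N := by
            have h1 : ∑ γ, (m' γ).natAbs
                = (m' α₀).natAbs + ∑ γ ∈ Finset.univ.erase α₀, (m' γ).natAbs :=
              (Finset.add_sum_erase _ _ (Finset.mem_univ α₀)).symm
            have h1' : ∑ γ ∈ Finset.univ.erase α₀, (m' γ).natAbs
                = ∑ γ ∈ Finset.univ.erase α₀, (m γ).natAbs := by
              refine Finset.sum_congr rfl fun γ hγ => ?_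
              rw [hvne γ (Finset.mem_erase.mp hγ).1]
            have h2 : N = (m α₀).natAbs + ∑ γ ∈ Finset.univ.erase α₀, (m γ).natAbs := by
              rw [← hN, ← Finset.add_sum_erase _ _ (Finset.mem_univ α₀)]
            omega
          have hcm' := IH _ hNlt m' hMotz' rfl
          have hfwd := QQAux.forward_step hcentral hLsym hLrow hunit hsys m' α₀
            (by
              intro γ hγ
              have hγα : γ ≠ α₀ := by
                intro h; rw [h, hdiag] at hγ; omega
              have h5 := hMotz α₀ γ hγ
              rw [abs_le] at h5
              have h6 := hmax' γ
              rw [hvne γ hγα, hv0]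
              omega)
            hcm'
          rw [hv0, show m α₀ - 1 + 1 = m α₀ by ring] at hfwd
          have hupd : Function.update m' α₀ (m α₀) = m := by
            funext γ
            by_cases hγ : γ = α₀
            · rw [hγ, Function.update_self]
            · rw [Function.update_of_ne hγ, hvne γ hγ]
          rwa [hupd] at hfwd
        · -- no positive entry: mutate the negative minimum up, then go back down
          push_neg at hposc
          obtain ⟨α₀, -, hmin⟩ := Finset.exists_min_image Finset.univ m hne
          have hmin' : ∀ γ, m α₀ ≤ m γ := fun γ => hmin γ (Finset.mem_univ γ)
          have hα₀neg : m α₀ < 0 := by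
            have h1 := hmin' γ₀
            have h2 := hposc γ₀
            omega
          set m' := Function.update m α₀ (m α₀ + 1) with hm'
          have hv0 : m' α₀ = m α₀ + 1 := by rw [hm', Function.update_self]
          have hvne : ∀ γ, γ ≠ α₀ → m' γ = m γ := by
            intro γ hγ; rw [hm', Function.update_of_ne hγ]
          have hMotz' : ∀ α β, C α β = -1 → |m' α - m' β| ≤ 1 := by
            intro α β hαβ
            have h1 := hMotz α β hαβ
            rw [abs_le] at h1 ⊢
            have h3 := hmin' α
            have h4 := hmin' β
            by_cases hα : α = α₀
            · by_cases hβ : β = α₀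
              · rw [hα, hβ, hv0]; omega
              · rw [hα] at h1; rw [hα, hv0, hvne β hβ]; omega
            · by_cases hβ : β = α₀
              · rw [hβ] at h1; rw [hβ, hv0, hvne α hα]; omega
              · rw [hvne α hα, hvne β hβ]; omega
          have hNlt : (∑ γ, (m' γ).natAbs) < N := by
            have h1 : ∑ γ, (m' γ).natAbs
                = (m' α₀).natAbs + ∑ γ ∈ Finset.univ.erase α₀, (m' γ).natAbs :=
              (Finset.add_sum_erase _ _ (Finset.mem_univ α₀)).symm
            have h1' : ∑ γ ∈ Finset.univ.erase α₀, (m' γ).natAbs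
                = ∑ γ ∈ Finset.univ.erase α₀, (m γ).natAbs := by
              refine Finset.sum_congr rfl fun γ hγ => ?_
              rw [hvne γ (Finset.mem_erase.mp hγ).1]
            have h2 : N = (m α₀).natAbs + ∑ γ ∈ Finset.univ.erase α₀, (m γ).natAbs := by
              rw [← hN, ← Finset.add_sum_erase _ _ (Finset.mem_univ α₀)]
            omega
          have hcm' := IH _ hNlt m' hMotz' rfl
          have hbwd := QQAux.backward_step hcentral hLsym hLrow hunit hsys m' α₀
            (by
              intro γ hγ
              have hγα : γ ≠ α₀ := by
                intro h; rw [h, hdiag] at hγ; omega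
              have h5 := hMotz α₀ γ hγ
              rw [abs_le] at h5
              have h6 := hmin' γ
              rw [hvne γ hγα, hv0]
              omega)
            hcm'
          rw [hv0, show m α₀ + 1 - 1 = m α₀ by ring] at hbwd
          have hupd : Function.update m' α₀ (m α₀) = m := by
            funext γ
            by_cases hγ : γ = α₀
            · rw [hγ, Function.update_self]
            · rw [Function.update_of_ne hγ, hvne γ hγ]
          rwa [hupd] at hbwd
  intro α β ε ε' hε hε'
  have hres := main (∑ γ, (mv γ).natAbs) mv hmv rfl α β (mv α + ε) (mv β + ε')
    (by rcases hε with h | h <;> rw [h] <;> simp) 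
    (by rcases hε' with h | h <;> rw [h] <;> simp)
  exact hres
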